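/- Let A_6 := ⌊1/A_4⌋ and let σ ∈ Φ^*. Then: (1) for every h > A_6 and every ρ ∈ Λ_h(σ), one has |ρ_R| ≥ |σ_R| + 1; (2) for every ρ ∈ Λ_1(σ), one has |ρ_R| − |σ_R| ≤ A_1. -/

import Mathlib

open Filter MeasureTheory
open scoped BigOperators ENNReal NNReal Topology

namespace LGQ

noncomputable section

/-- The alphabet `G = {(i,j) : 1 ≤ i ≤ n_j, 1 ≤ j ≤ m}`, encoded as a sigma type:
an element is `⟨j, i⟩` with `j : Fin m` (the `y`-coordinate) and `i : Fin (n j)`. -/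
abbrev Alph (m : ℕ) (n : Fin m → ℕ) := Σ j : Fin m, Fin (n j)

/-- A pair `σ = (σ_L, σ_R)` with `σ_L ∈ G^*` and `σ_R ∈ G_y^*`. -/
abbrev Wd (m : ℕ) (n : Fin m → ℕ) := List (Alph m n) × List (Fin m)

variable {m : ℕ} {n : Fin m → ℕ}

/-- `a_ω := ∏ a_{i_h j_h}` along a word `ω ∈ G^*`. -/
def aP (a : Alph m n → ℝ) (w : List (Alph m n)) : ℝ := (w.map a).prod

/-- `b_τ := ∏ b_{j_h}` along a word `τ ∈ G_y^*`. -/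
def bP (b : Fin m → ℝ) (τ : List (Fin m)) : ℝ := (τ.map b).prod

/-- `σ_y := (σ_L)_y ∗ σ_R` : the `y`-word of a pair `σ = σ_L ∗ σ_R`. -/
def sy (σ : Wd m n) : List (Fin m) := σ.1.map Sigma.fst ++ σ.2

/-- `Ψ_l := {σ = σ_L ∗ σ_R : σ_L ∈ G^l, σ_R ∈ G_y^*, b_{(σ_y)^-} ≥ a_{σ_L} > b_{σ_y}}`. -/
def Psi (a : Alph m n → ℝ) (b : Fin m → ℝ) (l : ℕ) : Set (Wd m n) :=
  {σ | σ.1.length = l ∧ 1 ≤ σ.2.length ∧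
    aP a σ.1 ≤ bP b (sy σ).dropLast ∧ bP b (sy σ) < aP a σ.1}

/-- `Ψ^* := ⋃_{l ≥ 1} Ψ_l`. -/
def PsiStar (a : Alph m n → ℝ) (b : Fin m → ℝ) : Set (Wd m n) :=
  {σ | ∃ l, 1 ≤ l ∧ σ ∈ Psi a b l}

/-- `q_j := Σ_{i=1}^{n_j} p_{ij}`. -/
def qf (p : Alph m n → ℝ) (j : Fin m) : ℝ := ∑ i : Fin (n j), p ⟨j, i⟩

/-- `p_{σ_L} := ∏ p_{i_h j_h}`. -/
def pP (p : Alph m n → ℝ) (w : List (Alph m n)) : ℝ := (w.map p).prod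

/-- `q_{σ_R} := ∏ q_{j_h}`. -/
def qP (p : Alph m n → ℝ) (τ : List (Fin m)) : ℝ := (τ.map (qf p)).prod

/-- `E_r(σ) := p_{σ_L} q_{σ_R} a_{σ_L}^r` (note `E_r(θ) = 1`). -/
def Er (a p : Alph m n → ℝ) (r : ℝ) (σ : Wd m n) : ℝ :=
  pP p σ.1 * qP p σ.2 * aP a σ.1 ^ r

/-- `a̲ := min a_{ij}`. -/
def aLo (a : Alph m n → ℝ) : ℝ := ⨅ g, a g

/-- `ā := max a_{ij}`. -/
def aHi (a : Alph m n → ℝ) : ℝ := ⨆ g, a g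

/-- `b̲ := min b_j`. -/
def bLo (b : Fin m → ℝ) : ℝ := ⨅ j, b j

/-- `b̄ := max b_j`. -/
def bHi (b : Fin m → ℝ) : ℝ := ⨆ j, b j

/-- `p̲ := min p_{ij}`. -/
def pLo (p : Alph m n → ℝ) : ℝ := ⨅ g, p g

/-- `q̲ := min q_j`. -/
def qLo (p : Alph m n → ℝ) : ℝ := ⨅ j, qf p j

/-- `A_1 := ⌊log a̲ / log b̄⌋ + 1`. -/
def A1 (a : Alph m n → ℝ) (b : Fin m → ℝ) : ℤ :=
  ⌊Real.log (aLo a) / Real.log (bHi b)⌋ + 1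

/-- `A_2 := ⌊log b̲ / log ā⌋ + 1`. -/
def A2 (a : Alph m n → ℝ) (b : Fin m → ℝ) : ℤ :=
  ⌊Real.log (bLo b) / Real.log (aHi a)⌋ + 1

/-- `A_3 := max_{(i,j)∈G} a_{ij}/b_j`. -/
def A3 (a : Alph m n → ℝ) (b : Fin m → ℝ) : ℝ := ⨆ g : Alph m n, a g / b g.1

/-- `A_4 := log A_3 / log b̲`. -/
def A4 (a : Alph m n → ℝ) (b : Fin m → ℝ) : ℝ := Real.log (A3 a b) / Real.log (bLo b)

/-- `A_6 := ⌊1/A_4⌋`. -/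
def A6 (a : Alph m n → ℝ) (b : Fin m → ℝ) : ℤ := ⌊1 / A4 a b⌋

/-- `η̲_r := p̲ q̲^{A_1} a̲^r`. -/
def etaLo (a : Alph m n → ℝ) (b : Fin m → ℝ) (p : Alph m n → ℝ) (r : ℝ) : ℝ :=
  pLo p * qLo p ^ A1 a b * aLo a ^ r

/-- `A_{5,r} := ⌊log(q̲² η̲_r)/(r·log ā)⌋`. -/
def A5 (a : Alph m n → ℝ) (b : Fin m → ℝ) (p : Alph m n → ℝ) (r : ℝ) : ℤ :=
  ⌊Real.log (qLo p ^ 2 * etaLo a b p r) / (r * Real.log (aHi a))⌋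

/-- `T_{1,r} := ⌊(A_1 + A_{5,r} + 3)/A_4⌋`. -/
def T1 (a : Alph m n → ℝ) (b : Fin m → ℝ) (p : Alph m n → ℝ) (r : ℝ) : ℤ :=
  ⌊((A1 a b + A5 a b p r + 3 : ℤ) : ℝ) / A4 a b⌋

/-- `ρ = σ^♭`:  for `σ ∈ Ψ_1`, `σ^♭ = θ`; for `σ ∈ Ψ_l` with `l ≥ 2`, `σ^♭` is the unique
`ρ ∈ Ψ_{l-1}` with `ρ_L = (σ_L)^-` and `ρ_y` an initial segment of `σ_y`. -/
def IsFlat (a : Alph m n → ℝ) (b : Fin m → ℝ) (σ ρ : Wd m n) : Prop :=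
  (σ.1.length = 1 ∧ ρ = (([], []) : Wd m n)) ∨
  (2 ≤ σ.1.length ∧ ρ ∈ Psi a b (σ.1.length - 1) ∧ ρ.1 = σ.1.dropLast ∧ sy ρ <+: sy σ)

/-- `Λ_{n,r} := {σ ∈ Ψ^* : E_r(σ^♭) ≥ η̲_r^n > E_r(σ)}`. -/
def Lam (a : Alph m n → ℝ) (b : Fin m → ℝ) (p : Alph m n → ℝ) (r : ℝ) (N : ℕ) :
    Set (Wd m n) :=
  {σ | σ ∈ PsiStar a b ∧ ∃ ρ : Wd m n, IsFlat a b σ ρ ∧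
    etaLo a b p r ^ N ≤ Er a p r ρ ∧ Er a p r σ < etaLo a b p r ^ N}

/-- `S_{n,r} := {σ ∈ Ψ^* : η̲_r^{n+1} ≤ E_r(σ) < η̲_r^n}`. -/
def Snr (a : Alph m n → ℝ) (b : Fin m → ℝ) (p : Alph m n → ℝ) (r : ℝ) (N : ℕ) :
    Set (Wd m n) :=
  {σ | σ ∈ PsiStar a b ∧ etaLo a b p r ^ (N + 1) ≤ Er a p r σ ∧
    Er a p r σ < etaLo a b p r ^ N}

/-- `G_1(σ) := {ω ∈ S_{n,r} : σ_L ⪯ ω_L and σ_y ⪯ ω_y}`. -/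
def G1 (a : Alph m n → ℝ) (b : Fin m → ℝ) (p : Alph m n → ℝ) (r : ℝ) (N : ℕ)
    (σ : Wd m n) : Set (Wd m n) :=
  {ω | ω ∈ Snr a b p r N ∧ σ.1 <+: ω.1 ∧ sy σ <+: sy ω}

/-- `Λ_h(σ) := {ρ ∈ Φ_{l+h} : σ ⪯ ρ}` (componentwise order on pairs). -/
def LamH (a : Alph m n → ℝ) (b : Fin m → ℝ) (σ : Wd m n) (h : ℕ) : Set (Wd m n) :=
  {ρ | ρ ∈ Psi a b (σ.1.length + h) ∧ σ.1 <+: ρ.1 ∧ σ.2 <+: ρ.2}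

/-- `I_{k,r}(t) := Σ_{ω∈Φ_k} E_r(ω)^t`. -/
def Ih (a : Alph m n → ℝ) (b : Fin m → ℝ) (p : Alph m n → ℝ) (r : ℝ) (k : ℕ) (t : ℝ) : ℝ :=
  ∑' ω : Psi a b k, Er a p r ω.1 ^ t

/-- `Υ_n(t,s) := Σ_{σ∈Ψ_n} (p_{σ_L} q_{σ_R})^t a_{σ_L}^s`. -/
def Ups (a : Alph m n → ℝ) (b : Fin m → ℝ) (p : Alph m n → ℝ) (N : ℕ) (t s : ℝ) : ℝ :=
  ∑' σ : Psi a b N, (pP p σ.1.1 * qP p σ.1.2) ^ t * aP a σ.1.1 ^ s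

/-- `τ_0 := ((1,j_0),(n_{j_0},j_0))`. -/
def tau0 (j0 : Fin m) (h : 2 ≤ n j0) : List (Alph m n) :=
  [⟨j0, ⟨0, by omega⟩⟩, ⟨j0, ⟨n j0 - 1, by omega⟩⟩]

/-- `σ̄` is a bar-extension of `σ ∈ Ψ_l`: `σ̄ ∈ Ψ_{l+2}`, `σ̄_L = σ_L ∗ τ_0`, `σ_R ⪯ σ̄_R`. -/
def BarExt (a : Alph m n → ℝ) (b : Fin m → ℝ) (j0 : Fin m) (h : 2 ≤ n j0)
    (σ σb : Wd m n) : Prop :=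
  σb ∈ Psi a b (σ.1.length + 2) ∧ σb.1 = σ.1 ++ tau0 j0 h ∧ σ.2 <+: σb.2

/-- cylinder set `[σ] ⊆ Φ_∞ = G^ℕ × G_y^ℕ`. -/
def Cyl (σ : Wd m n) : Set ((ℕ → Alph m n) × (ℕ → Fin m)) :=
  {x | (∀ i : ℕ, ∀ hi : i < σ.1.length, x.1 i = σ.1.get ⟨i, hi⟩) ∧
       (∀ i : ℕ, ∀ hi : i < σ.2.length, x.2 i = σ.2.get ⟨i, hi⟩)}

/-- the affine map `f_{ij}(x,y) = (a_{ij} x + c_{ij}, b_j y + d_j)`. -/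
def fmap (a : Alph m n → ℝ) (b : Fin m → ℝ) (c : Alph m n → ℝ) (d : Fin m → ℝ)
    (g : Alph m n) : ℝ × ℝ → ℝ × ℝ :=
  fun x => (a g * x.1 + c g, b g.1 * x.2 + d g.1)

/-- `A_{L,σ} = c_{i_1j_1} + Σ_{p≥2} (∏_{h<p} a_{i_hj_h}) c_{i_pj_p}`. -/
def xL (a c : Alph m n → ℝ) : List (Alph m n) → ℝ
  | [] => 0
  | g :: w => c g + a g * xL a c w

/-- `B_{L,σ} = d_{j_1} + Σ_{p≥2} (∏_{h<p} b_{j_h}) d_{j_p}`. -/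
def yL (b d : Fin m → ℝ) : List (Fin m) → ℝ
  | [] => 0
  | j :: τ => d j + b j * yL b d τ

/-- the approximate square `F_σ = [A_{L,σ}, A_{L,σ}+a_{σ_L}] × [B_{L,σ}, B_{L,σ}+b_{σ_y}]`. -/
def Fsq (a c : Alph m n → ℝ) (b d : Fin m → ℝ) (σ : Wd m n) : Set (ℝ × ℝ) :=
  Set.Icc (xL a c σ.1) (xL a c σ.1 + aP a σ.1) ×ˢ
    Set.Icc (yL b d (sy σ)) (yL b d (sy σ) + bP b (sy σ))

/-- the Euclidean distance on `ℝ²`. -/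
def eudist (x y : ℝ × ℝ) : ℝ := Real.sqrt ((x.1 - y.1) ^ 2 + (x.2 - y.2) ^ 2)

/-- the horizontal distance `d_h(S,T) = inf{|x-x'| : (x,y)∈S, (x',y')∈T}`. -/
def dH (S T : Set (ℝ × ℝ)) : ℝ := sInf {e | ∃ x ∈ S, ∃ y ∈ T, e = |x.1 - y.1|}

/-- the (Euclidean) diameter of a subset of `ℝ²`. -/
def euDiam (S : Set (ℝ × ℝ)) : ℝ := sSup {e | ∃ x ∈ S, ∃ y ∈ S, e = eudist x y}

/-- the `N`-th quantization error of order `r`. -/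
def qerr (μ : Measure (ℝ × ℝ)) (r : ℝ) (N : ℕ) : ℝ :=
  sInf {e : ℝ | ∃ α : Finset (ℝ × ℝ), ∃ hα : α.Nonempty, α.card ≤ N ∧
    e = (∫ x, α.inf' hα (fun y => eudist x y ^ r) ∂μ) ^ (1 / r)}

/-- the topological support of a measure on `ℝ²`. -/
def suppSet (μ : Measure (ℝ × ℝ)) : Set (ℝ × ℝ) :=
  {x | ∀ U : Set (ℝ × ℝ), IsOpen U → x ∈ U → μ U ≠ 0}

/-- the dyadic square `[k 2^{-N}, (k+1) 2^{-N}) × [k' 2^{-N}, (k'+1) 2^{-N})`. -/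
def Dy (N : ℕ) (k : ℤ × ℤ) : Set (ℝ × ℝ) :=
  Set.Ico ((k.1 : ℝ) * (2 : ℝ) ^ (-(N : ℤ))) (((k.1 : ℝ) + 1) * (2 : ℝ) ^ (-(N : ℤ))) ×ˢ
    Set.Ico ((k.2 : ℝ) * (2 : ℝ) ^ (-(N : ℤ))) (((k.2 : ℝ) + 1) * (2 : ℝ) ^ (-(N : ℤ)))


lemma bP_single' (b : Fin m → ℝ) (j : Fin m) : bP b [j] = b j := by simp [bP]

lemma aP_append' (a : Alph m n → ℝ) (u v : List (Alph m n)) :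
    aP a (u ++ v) = aP a u * aP a v := by simp [aP]

lemma bP_append' (b : Fin m → ℝ) (u v : List (Fin m)) :
    bP b (u ++ v) = bP b u * bP b v := by simp [bP]

lemma bP_pos' {b : Fin m → ℝ} (hb : ∀ j, 0 < b j) (τ : List (Fin m)) : 0 < bP b τ := by
  induction τ with
  | nil => simp [bP]
  | cons j τ ih => simpa [bP] using mul_pos (hb j) (by simpa [bP] using ih)

lemma aP_pos' {a : Alph m n → ℝ} (ha : ∀ g, 0 < a g) (w : List (Alph m n)) : 0 < aP a w := by
  induction w with
  | nil => simp [aP]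
  | cons g w ih => simpa [aP] using mul_pos (ha g) (by simpa [aP] using ih)

lemma bP_le_pow' {b : Fin m → ℝ} (hb : ∀ j, 0 < b j) {C : ℝ} (hC : 0 ≤ C)
    (h : ∀ j, b j ≤ C) (τ : List (Fin m)) : bP b τ ≤ C ^ τ.length := by
  induction τ with
  | nil => simp [bP]
  | cons j τ ih =>
    have h1 : bP b (j :: τ) = b j * bP b τ := by simp [bP]
    rw [h1, List.length_cons, pow_succ, mul_comm (C ^ τ.length) C]
    exact mul_le_mul (h j) ih (bP_pos' hb τ).le hC

lemma aP_le_pow_mul' {a : Alph m n → ℝ} {b : Fin m → ℝ} {C : ℝ} (hC : 0 ≤ C)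
    (hb : ∀ j, 0 < b j) (ha : ∀ g, 0 < a g)
    (h : ∀ g : Alph m n, a g ≤ C * b g.1) (w : List (Alph m n)) :
    aP a w ≤ C ^ w.length * bP b (w.map Sigma.fst) := by
  induction w with
  | nil => simp [aP, bP]
  | cons g w ih =>
    have h1 : aP a (g :: w) = a g * aP a w := by simp [aP]
    have h2 : bP b ((g :: w).map Sigma.fst) = b g.1 * bP b (w.map Sigma.fst) := by simp [bP]
    rw [h1, h2, List.length_cons, pow_succ]
    calc a g * aP a w ≤ (C * b g.1) * (C ^ w.length * bP b (w.map Sigma.fst)) :=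
          mul_le_mul (h g) ih (aP_pos' ha w).le
            (mul_nonneg hC (hb g.1).le)
      _ = C ^ w.length * C * (b g.1 * bP b (w.map Sigma.fst)) := by ring

theorem stmt11
    (m : ℕ) (hm : 2 ≤ m) (n : Fin m → ℕ) (hn : ∀ j, 1 ≤ n j)
    (a : Alph m n → ℝ) (b : Fin m → ℝ)
    (hab : ∀ g : Alph m n, 0 < a g ∧ a g < b g.1 ∧ b g.1 < 1)
    (σ : Wd m n) (hσ : σ ∈ PsiStar a b) :
    (∀ h : ℕ, A6 a b < (h : ℤ) → ∀ ρ ∈ LamH a b σ h, σ.2.length + 1 ≤ ρ.2.length) ∧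
    (∀ ρ ∈ LamH a b σ 1, (ρ.2.length : ℤ) - (σ.2.length : ℤ) ≤ A1 a b) := by
  haveI : Nonempty (Fin m) := ⟨⟨0, by omega⟩⟩
  haveI : Nonempty (Alph m n) := ⟨⟨⟨0, by omega⟩, ⟨0, by have := hn ⟨0, by omega⟩; omega⟩⟩⟩
  have ha : ∀ g : Alph m n, 0 < a g := fun g => (hab g).1
  have hb : ∀ j : Fin m, 0 < b j := by
    intro j
    have := hn j
    have h := hab ⟨j, ⟨0, by omega⟩⟩
    exact lt_trans h.1 h.2.1
  have hb1 : ∀ j : Fin m, b j < 1 := by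
    intro j
    have := hn j
    exact (hab ⟨j, ⟨0, by omega⟩⟩).2.2
  -- properties of aLo
  have haLo_le : ∀ g, aLo a ≤ a g := fun g => ciInf_le (Finite.bddBelow_range a) g
  have haLo_pos : 0 < aLo a := by
    obtain ⟨g0, hg0⟩ := Finite.exists_min a
    exact lt_of_lt_of_le (ha g0) (le_ciInf hg0)
  have haLo_lt1 : aLo a < 1 := by
    obtain ⟨g⟩ := (inferInstance : Nonempty (Alph m n))
    exact lt_of_le_of_lt (haLo_le g) (lt_trans (hab g).2.1 (hb1 g.1))
  -- properties of bLo
  have hbLo_le : ∀ j, bLo b ≤ b j := fun j => ciInf_le (Finite.bddBelow_range b) j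
  have hbLo_pos : 0 < bLo b := by
    obtain ⟨j0, hj0⟩ := Finite.exists_min b
    exact lt_of_lt_of_le (hb j0) (le_ciInf hj0)
  have hbLo_lt1 : bLo b < 1 := by
    obtain ⟨j⟩ := (inferInstance : Nonempty (Fin m))
    exact lt_of_le_of_lt (hbLo_le j) (hb1 j)
  -- properties of bHi
  have hbHi_le : ∀ j, b j ≤ bHi b := fun j => le_ciSup (Finite.bddAbove_range b) j
  have hbHi_pos : 0 < bHi b := by
    obtain ⟨j⟩ := (inferInstance : Nonempty (Fin m))
    exact lt_of_lt_of_le (hb j) (hbHi_le j)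
  have hbHi_lt1 : bHi b < 1 := by
    obtain ⟨j0, hj0⟩ := Finite.exists_max b
    exact lt_of_le_of_lt (ciSup_le hj0) (hb1 j0)
  -- properties of A3
  have hA3_le : ∀ g : Alph m n, a g ≤ A3 a b * b g.1 := by
    intro g
    have h1 : a g / b g.1 ≤ A3 a b :=
      le_ciSup (Finite.bddAbove_range (fun g : Alph m n => a g / b g.1)) g
    calc a g = (a g / b g.1) * b g.1 := (div_mul_cancel₀ _ (hb g.1).ne').symm
      _ ≤ A3 a b * b g.1 := mul_le_mul_of_nonneg_right h1 (hb g.1).le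
  have hA3_pos : 0 < A3 a b := by
    obtain ⟨g⟩ := (inferInstance : Nonempty (Alph m n))
    exact lt_of_lt_of_le (div_pos (ha g) (hb g.1))
      (le_ciSup (Finite.bddAbove_range (fun g : Alph m n => a g / b g.1)) g)
  have hA3_lt1 : A3 a b < 1 := by
    obtain ⟨g0, hg0⟩ := Finite.exists_max (fun g : Alph m n => a g / b g.1)
    exact lt_of_le_of_lt (ciSup_le hg0) ((div_lt_one (hb g0.1)).mpr (hab g0).2.1)
  -- logs
  have hlogA3 : Real.log (A3 a b) < 0 := Real.log_neg hA3_pos hA3_lt1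
  have hlogbLo : Real.log (bLo b) < 0 := Real.log_neg hbLo_pos hbLo_lt1
  have hlogbHi : Real.log (bHi b) < 0 := Real.log_neg hbHi_pos hbHi_lt1
  have hlogaLo : Real.log (aLo a) < 0 := Real.log_neg haLo_pos haLo_lt1
  have hA4_pos : 0 < A4 a b := div_pos_of_neg_of_neg hlogA3 hlogbLo
  obtain ⟨l, hl1, hσ1, hσ2, hσ3, hσ4⟩ := hσ
  constructor
  · -- part (1)
    intro h hA6h ρ hρ
    obtain ⟨⟨hρ1, hρ2, hρ3, hρ4⟩, hpre1, hpre2⟩ := hρ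
    by_contra hcon
    push_neg at hcon
    have hlen : ρ.2.length = σ.2.length := le_antisymm (by omega) hpre2.length_le
    have heq2 : σ.2 = ρ.2 := hpre2.eq_of_length hlen.symm
    obtain ⟨u, hu⟩ := hpre1
    have hulen : u.length = h := by
      have := hρ1
      rw [← hu] at this
      simp at this
      omega
    -- σ_y nonempty
    have hsyne : sy σ ≠ [] := by
      have : (sy σ).length = σ.1.length + σ.2.length := by simp [sy]
      intro hc
      rw [hc] at this
      simp at this
      omega
    set P := bP b (sy σ).dropLast with hP
    have hPpos : 0 < P := bP_pos' hb _
    set jl := (sy σ).getLast hsyne with hjl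
    have hsplit : bP b (sy σ) = P * b jl := by
      conv_lhs => rw [← List.dropLast_append_getLast hsyne]
      rw [bP_append', bP_single']
    set X := bP b (u.map Sigma.fst) with hX
    have hXpos : 0 < X := bP_pos' hb _
    -- rewrite bP b (sy ρ)
    have hsyρ : bP b (sy ρ) = bP b (sy σ) * X := by
      simp only [sy, ← hu, ← heq2, List.map_append, bP_append']
      ring
    have haρ : aP a ρ.1 = aP a σ.1 * aP a u := by rw [← hu, aP_append']
    have hau : aP a u ≤ A3 a b ^ h * X := by
      rw [← hulen]
      exact aP_le_pow_mul' hA3_pos.le hb ha hA3_le u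
    -- chain
    have hchain : P * b jl * X < P * (A3 a b ^ h) * X := by
      calc P * b jl * X = bP b (sy ρ) := by rw [hsyρ, hsplit]
        _ < aP a ρ.1 := hρ4
        _ = aP a σ.1 * aP a u := haρ
        _ ≤ aP a σ.1 * (A3 a b ^ h * X) :=
            mul_le_mul_of_nonneg_left hau (aP_pos' ha σ.1).le
        _ ≤ P * (A3 a b ^ h * X) :=
            mul_le_mul_of_nonneg_right hσ3 (mul_pos (pow_pos hA3_pos h) hXpos).le
        _ = P * (A3 a b ^ h) * X := by ring
    have hbjl : b jl < A3 a b ^ h := by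
      have h1 := lt_of_mul_lt_mul_right hchain hXpos.le
      exact lt_of_mul_lt_mul_left h1 hPpos.le
    have hblt : bLo b < A3 a b ^ h := lt_of_le_of_lt (hbLo_le jl) hbjl
    have hlog : Real.log (bLo b) < (h : ℝ) * Real.log (A3 a b) := by
      calc Real.log (bLo b) < Real.log (A3 a b ^ h) := Real.log_lt_log hbLo_pos hblt
        _ = (h : ℝ) * Real.log (A3 a b) := Real.log_pow (A3 a b) h
    -- h * A4 < 1, hence h < 1/A4
    have hmul : (h : ℝ) * A4 a b < 1 := by
      rw [A4, mul_div_assoc'] at *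
      exact (div_lt_one_of_neg hlogbLo).mpr hlog
    have hlt : (h : ℝ) < 1 / A4 a b := (lt_div_iff₀ hA4_pos).mpr hmul
    have := Int.floor_lt.mp hA6h
    push_cast at this
    linarith
  · -- part (2)
    intro ρ hρ
    obtain ⟨⟨hρ1, hρ2, hρ3, hρ4⟩, hpre1, hpre2⟩ := hρ
    obtain ⟨u, hu⟩ := hpre1
    obtain ⟨v, hv⟩ := hpre2
    have hulen : u.length = 1 := by
      have := hρ1
      rw [← hu] at this
      simp at this
      omega
    obtain ⟨g, hg⟩ := List.length_eq_one_iff.mp hulen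
    subst hg
    set k := v.length with hk
    have hρ2len : ρ.2.length = σ.2.length + k := by rw [← hv]; simp [hk]
    have hgoal : ∀ _ : (k : ℤ) ≤ A1 a b, (ρ.2.length : ℤ) - (σ.2.length : ℤ) ≤ A1 a b := by
      intro hkk
      rw [hρ2len]
      push_cast
      omega
    apply hgoal
    rcases eq_or_ne v [] with hvnil | hvne
    · have : k = 0 := by rw [hk, hvnil]; rfl
      rw [this]
      have : (0 : ℤ) ≤ ⌊Real.log (aLo a) / Real.log (bHi b)⌋ :=
        Int.floor_nonneg.mpr (le_of_lt (div_pos_of_neg_of_neg hlogaLo hlogbHi))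
      rw [A1]
      omega
    · -- v nonempty
      have hdrop : (sy ρ).dropLast = (σ.1.map Sigma.fst ++ [g.1] ++ σ.2) ++ v.dropLast := by
        rw [sy, ← hu, ← hv, List.map_append]
        have : (σ.1.map Sigma.fst ++ [g].map Sigma.fst) ++ (σ.2 ++ v)
            = (σ.1.map Sigma.fst ++ [g.1] ++ σ.2) ++ v := by simp
        rw [this, List.dropLast_append_of_ne_nil hvne]
      have hbdrop : bP b (sy ρ).dropLast = bP b (sy σ) * b g.1 * bP b v.dropLast := by
        rw [hdrop, bP_append', bP_append', bP_append', bP_single', sy, bP_append']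
        ring
      have haρ : aP a ρ.1 = aP a σ.1 * a g := by
        rw [← hu, aP_append']; simp [aP]
      have hvd : bP b v.dropLast ≤ bHi b ^ (k - 1) := by
        have := bP_le_pow' hb hbHi_pos.le hbHi_le v.dropLast
        rwa [List.length_dropLast] at this
      have hchain : aP a σ.1 * a g < aP a σ.1 * (b g.1 * bP b v.dropLast) := by
        calc aP a σ.1 * a g = aP a ρ.1 := haρ.symm
          _ ≤ bP b (sy ρ).dropLast := hρ3
          _ = bP b (sy σ) * (b g.1 * bP b v.dropLast) := by rw [hbdrop]; ring
          _ < aP a σ.1 * (b g.1 * bP b v.dropLast) :=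
            mul_lt_mul_of_pos_right hσ4 (mul_pos (hb g.1) (bP_pos' hb _))
      have hag : a g < b g.1 * bP b v.dropLast :=
        lt_of_mul_lt_mul_left hchain (aP_pos' ha σ.1).le
      have hk1 : 1 ≤ k := by
        rw [hk]
        exact List.length_pos_iff.mpr hvne
      have hfin : aLo a < bHi b ^ k := by
        calc aLo a ≤ a g := haLo_le g
          _ < b g.1 * bP b v.dropLast := hag
          _ ≤ bHi b * bHi b ^ (k - 1) :=
            mul_le_mul (hbHi_le g.1) hvd (bP_pos' hb _).le hbHi_pos.le
          _ = bHi b ^ k := by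
            rw [← pow_succ']
            congr 1
            omega
      have hlog : Real.log (aLo a) < (k : ℝ) * Real.log (bHi b) := by
        calc Real.log (aLo a) < Real.log (bHi b ^ k) := Real.log_lt_log haLo_pos hfin
          _ = (k : ℝ) * Real.log (bHi b) := Real.log_pow (bHi b) k
      have hkle : (k : ℝ) ≤ Real.log (aLo a) / Real.log (bHi b) :=
        (le_div_iff_of_neg hlogbHi).mpr hlog.le
      have : (k : ℤ) ≤ ⌊Real.log (aLo a) / Real.log (bHi b)⌋ :=
        Int.le_floor.mpr (by exact_mod_cast hkle)
      rw [A1]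
      omega

end

end LGQ
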